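/- Let c > 2√a₁ and let w be a monotonically increasing KPP wave with speed c. Then there exists a constant b_w > 0 such that (b - w(ξ))·e^{-((c - √(c² + 4b₁))/2)·ξ} → b_w as ξ → +∞. -/

import Mathlib

set_option maxHeartbeats 4000000

open Filter Set MeasureTheory

lemma integrableOn_exp_rate {ρ : ℝ} (a : ℝ) (hρ : ρ < 0) :
    IntegrableOn (fun x => Real.exp (ρ * x)) (Ioi a) := by
  have := exp_neg_integrableOn_Ioi a (neg_pos.2 hρ)
  simpa using this

lemma integrableOn_of_exp_bound {g : ℝ → ℝ} (hg : Continuous g) {a C ρ : ℝ} (hρ : ρ < 0)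
    (hb : ∀ x ∈ Ioi a, |g x| ≤ C * Real.exp (ρ * x)) : IntegrableOn g (Ioi a) := by
  refine Integrable.mono' ((integrableOn_exp_rate a hρ).const_mul C)
    hg.aestronglyMeasurable.restrict ?_
  refine (ae_restrict_iff' measurableSet_Ioi).2 (Filter.Eventually.of_forall ?_)
  intro x hx
  simpa [Real.norm_eq_abs] using hb x hx

lemma integral_Ioi_exp_rate {k : ℝ} (a : ℝ) (hk : 0 < k) :
    ∫ x in Ioi a, Real.exp (-(k * x)) = Real.exp (-(k * a)) / k := by
  have hder : ∀ x ∈ Ici a, HasDerivAt (fun x => -Real.exp (-(k * x)) / k)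
      (Real.exp (-(k * x))) x := by
    intro x _
    have h1 : HasDerivAt (fun x : ℝ => -(k * x)) (-k) x := by
      simpa using ((hasDerivAt_id x).const_mul k).fun_neg
    have h2 := (Real.hasDerivAt_exp (-(k * x))).comp x h1
    have h3 := (h2.fun_neg).div_const k
    refine h3.congr_deriv ?_
    field_simp
  have hint : IntegrableOn (fun x => Real.exp (-(k * x))) (Ioi a) := by
    have := integrableOn_exp_rate a (neg_neg_iff_pos.2 hk : -k < 0)
    simpa [neg_mul] using this
  have htend : Tendsto (fun x => -Real.exp (-(k * x)) / k) atTop (nhds 0) := by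
    have h0 : Tendsto (fun x : ℝ => Real.exp (-(k * x))) atTop (nhds 0) := by
      have : Tendsto (fun x : ℝ => -(k * x)) atTop atBot :=
        tendsto_neg_atBot_iff.2 ((tendsto_const_mul_atTop_of_pos hk).2 tendsto_id)
      exact Real.tendsto_exp_atBot.comp this
    have := (h0.neg).div_const k
    simpa using this
  have := MeasureTheory.integral_Ioi_of_hasDerivAt_of_tendsto' hder hint htend
  rw [this]
  ring

lemma tendsto_limit_of_deriv {F G : ℝ → ℝ} (hF : ∀ x, HasDerivAt F (G x) x)
    (hG : Continuous G) {A : ℝ} (hint : IntegrableOn G (Ioi A)) :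
    Tendsto F atTop (nhds (F A + ∫ t in Ioi A, G t)) := by
  have h1 : ∀ ξ : ℝ, F ξ = F A + ∫ t in A..ξ, G t := by
    intro ξ
    rw [intervalIntegral.integral_eq_sub_of_hasDerivAt (fun x _ => hF x)
      (hG.intervalIntegrable A ξ)]
    ring
  have h2 := MeasureTheory.intervalIntegral_tendsto_integral_Ioi A hint tendsto_id
  exact (tendsto_const_nhds.add h2).congr fun ξ => (h1 ξ).symm

lemma quad_bound (b b₁ : ℝ) (hb : 0 < b) (hb₁ : 0 < b₁) (f : ℝ → ℝ)
    (hfC2 : ContDiffOn ℝ 2 f (Set.Icc 0 b)) (hfb : f b = 0) (hf'b : deriv f b = -b₁) :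
    ∃ K > 0, ∀ u : ℝ, 0 < u → u ≤ b / 2 → |f (b - u) - b₁ * u| ≤ K * u ^ 2 := by
  have hud : UniqueDiffOn ℝ (Icc 0 b) := uniqueDiffOn_Icc hb
  set g1 := derivWithin f (Icc 0 b) with hg1def
  have hg1 : ContDiffOn ℝ 1 g1 (Icc 0 b) := hfC2.derivWithin hud (by norm_num)
  have hg1d : DifferentiableOn ℝ g1 (Icc 0 b) := hg1.differentiableOn (by norm_num)
  have hg2c : ContinuousOn (derivWithin g1 (Icc 0 b)) (Icc 0 b) :=
    hg1.continuousOn_derivWithin hud le_rfl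
  obtain ⟨M, hM⟩ := (isCompact_Icc).exists_bound_of_continuousOn hg2c
  have hbmem : b ∈ Icc (0:ℝ) b := ⟨hb.le, le_refl b⟩
  have hM0 : 0 ≤ M := le_trans (norm_nonneg _) (hM b hbmem)
  have hfb' : DifferentiableAt ℝ f b := by
    by_contra h
    rw [deriv_zero_of_not_differentiableAt h] at hf'b
    linarith
  have hg1b : g1 b = -b₁ := by
    rw [hg1def, hfb'.derivWithin (hud b hbmem), hf'b]
  have hdiffx : ∀ x : ℝ, b / 2 ≤ x → x < b → DifferentiableAt ℝ f x := by
    intro x hx1 hx2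
    exact (hfC2.differentiableOn (by norm_num)).differentiableAt
      (Icc_mem_nhds (by linarith) hx2)
  have hder : ∀ x : ℝ, b / 2 ≤ x → x ≤ b → |deriv f x + b₁| ≤ M * (b - x) := by
    intro x hx1 hx2
    rcases eq_or_lt_of_le hx2 with h | h
    · subst h; rw [hf'b]; simp
    · have hxm : x ∈ Icc (0:ℝ) b := ⟨by linarith, hx2⟩
      have h1 : deriv f x = g1 x := by
        rw [hg1def, derivWithin_of_mem_nhds (Icc_mem_nhds (by linarith) h)]
      have h2 := Convex.norm_image_sub_le_of_norm_derivWithin_le hg1d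
        (fun y hy => hM y hy) (convex_Icc 0 b) hbmem hxm
      rw [h1]
      calc |g1 x + b₁| = ‖g1 x - g1 b‖ := by rw [hg1b, Real.norm_eq_abs]; ring_nf
        _ ≤ M * ‖x - b‖ := h2
        _ = M * (b - x) := by rw [Real.norm_eq_abs, abs_sub_comm, abs_of_nonneg (by linarith)]
  refine ⟨M + 1, by linarith, ?_⟩
  intro u hu0 hu
  set G : ℝ → ℝ := fun t => f (b - t) - b₁ * t with hGdef
  have hG' : ∀ t ∈ Icc (0:ℝ) u, HasDerivWithinAt G (-(deriv f (b - t)) - b₁) (Icc 0 u) t := by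
    intro t ht
    have hdf : DifferentiableAt ℝ f (b - t) := by
      rcases eq_or_lt_of_le ht.1 with h | h
      · rw [← h]; simpa using hfb'
      · exact hdiffx (b - t) (by linarith [ht.2]) (by linarith)
    have hinner : HasDerivAt (fun t : ℝ => b - t) (-1) t := by
      simpa using (hasDerivAt_id t).const_sub b
    have houter := hdf.hasDerivAt
    have hcomp := HasDerivAt.comp t (by exact houter) hinner
    have hlin : HasDerivAt (fun t : ℝ => b₁ * t) b₁ t := by
      simpa using (hasDerivAt_id t).const_mul b₁
    have := hcomp.sub hlin
    have heq : deriv f (b - t) * (-1) - b₁ = -(deriv f (b - t)) - b₁ := by ring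
    rw [heq] at this
    exact this.hasDerivWithinAt
  have hbd : ∀ t ∈ Icc (0:ℝ) u, ‖-(deriv f (b - t)) - b₁‖ ≤ M * u := by
    intro t ht
    have h1 : |deriv f (b - t) + b₁| ≤ M * (b - (b - t)) :=
      hder (b - t) (by linarith [ht.2]) (by linarith [ht.1])
    rw [Real.norm_eq_abs]
    calc |-(deriv f (b - t)) - b₁| = |deriv f (b - t) + b₁| := by rw [abs_sub_comm]; ring_nf
      _ ≤ M * t := by simpa using h1
      _ ≤ M * u := by nlinarith [ht.2]
  have key := Convex.norm_image_sub_le_of_norm_hasDerivWithin_le hG' hbd (convex_Icc 0 u)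
    (⟨le_refl 0, hu0.le⟩ : (0:ℝ) ∈ Icc (0:ℝ) u) (⟨hu0.le, le_refl u⟩ : u ∈ Icc (0:ℝ) u)
  have hG0 : G 0 = 0 := by simp [hGdef, hfb]
  rw [hG0, sub_zero, sub_zero, Real.norm_eq_abs, Real.norm_eq_abs] at key
  calc |f (b - u) - b₁ * u| = |G u| := rfl
    _ ≤ M * u * |u| := key
    _ = M * u ^ 2 := by rw [abs_of_pos hu0]; ring
    _ ≤ (M + 1) * u ^ 2 := by nlinarith

/-- A KPP wave with speed `c`: a C² solution of `w'' - c w' + f(w) = 0` on ℝ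
with `w → 0` at `-∞` and `w → b` at `+∞`. -/
def IsKPPWave (b c : ℝ) (f w : ℝ → ℝ) : Prop :=
  ContDiff ℝ 2 w ∧
  (∀ ξ : ℝ, deriv (deriv w) ξ - c * deriv w ξ + f (w ξ) = 0) ∧
  Tendsto w atBot (nhds 0) ∧ Tendsto w atTop (nhds b)

theorem kpp_decay_at_plus_infty_noncritical
    (b a₁ b₁ : ℝ) (hb : 0 < b) (ha₁ : 0 < a₁) (hb₁ : 0 < b₁)
    (f : ℝ → ℝ) (hfC2 : ContDiffOn ℝ 2 f (Set.Icc 0 b))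
    (hf0 : f 0 = 0) (hfb : f b = 0)
    (hfpos : ∀ x ∈ Set.Ioo 0 b, 0 < f x)
    (hf'0 : deriv f 0 = a₁) (hf'b : deriv f b = -b₁)
    (c : ℝ) (hc : 2 * Real.sqrt a₁ < c)
    (w : ℝ → ℝ) (hmono : StrictMono w) (hw : IsKPPWave b c f w) :
    ∃ bw : ℝ, 0 < bw ∧
      Tendsto (fun ξ : ℝ => (b - w ξ) * Real.exp (-((c - Real.sqrt (c ^ 2 + 4 * b₁)) / 2 * ξ)))
        atTop (nhds bw) := by
  obtain ⟨hwC2, hode, hwbot, hwtop⟩ := hw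
  -- constants
  have hs0 : (0:ℝ) ≤ c ^ 2 + 4 * b₁ := by nlinarith
  have hs2 : (Real.sqrt (c ^ 2 + 4 * b₁)) ^ 2 = c ^ 2 + 4 * b₁ := Real.sq_sqrt hs0
  have hc0 : 0 < c := lt_of_le_of_lt (by positivity) hc
  have hcs : c < Real.sqrt (c ^ 2 + 4 * b₁) := by
    nlinarith [Real.sqrt_nonneg (c ^ 2 + 4 * b₁)]
  set μ : ℝ := (c - Real.sqrt (c ^ 2 + 4 * b₁)) / 2 with hμdef
  set μp : ℝ := (c + Real.sqrt (c ^ 2 + 4 * b₁)) / 2 with hμpdef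
  clear_value μ μp
  have hμ : μ < 0 := by rw [hμdef]; linarith
  have hμp : 0 < μp := by rw [hμpdef]; positivity
  have hsum : μ + μp = c := by rw [hμdef, hμpdef]; ring
  have hmulμ : μ * μp = -b₁ := by
    rw [hμdef, hμpdef]
    nlinarith [hs2]
  clear hμdef hμpdef hs2 hcs
  -- smoothness of w
  have hdw : Differentiable ℝ w := hwC2.differentiable (by norm_num)
  have hC1d : ContDiff ℝ 1 (deriv w) := by
    have h2 : ContDiff ℝ (1 + 1 : ℕ) w := by exact_mod_cast hwC2
    exact (contDiff_succ_iff_deriv.mp (by exact_mod_cast h2)).2.2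
  have hdw1 : Differentiable ℝ (deriv w) := hC1d.differentiable (by norm_num)
  have hcw2 : Continuous (deriv (deriv w)) := hC1d.continuous_deriv le_rfl
  have hcw1 : Continuous (deriv w) := hdw1.continuous
  have hcw : Continuous w := hdw.continuous
  have hODE : ∀ ξ, deriv (deriv w) ξ = c * deriv w ξ - f (w ξ) := fun ξ => by
    linarith [hode ξ]
  -- bounds on w
  have hwub : ∀ ξ, w ξ < b := by
    intro ξ
    have h1 : w ξ < w (ξ + 1) := hmono (by linarith)
    have h2 : w (ξ + 1) ≤ b :=
      ge_of_tendsto hwtop (eventually_atTop.2 ⟨ξ + 1, fun t ht => hmono.monotone ht⟩)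
    linarith
  have hwlb : ∀ ξ, 0 < w ξ := by
    intro ξ
    have h1 : w (ξ - 1) < w ξ := hmono (by linarith)
    have h2 : 0 ≤ w (ξ - 1) :=
      le_of_tendsto hwbot (eventually_atBot.2 ⟨ξ - 1, fun t ht => hmono.monotone ht⟩)
    linarith
  have hW1 : ∀ ξ, 0 ≤ deriv w ξ := by
    intro ξ
    have hslope := hasDerivAt_iff_tendsto_slope.1 (hdw ξ).hasDerivAt
    have h2 : Tendsto (slope w ξ) (nhdsWithin ξ (Ioi ξ)) (nhds (deriv w ξ)) :=
      hslope.mono_left (nhdsWithin_mono ξ fun x hx => ne_of_gt hx)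
    refine ge_of_tendsto h2 ?_
    filter_upwards [self_mem_nhdsWithin] with x hx
    have : w ξ < w x := hmono hx
    have hxξ : (0:ℝ) < x - ξ := sub_pos.2 hx
    rw [slope_def_field]
    exact div_nonneg (by linarith) hxξ.le
  -- u facts
  have hu0 : Tendsto (fun ξ => b - w ξ) atTop (nhds 0) := by
    have h0 := (tendsto_const_nhds : Tendsto (fun _ : ℝ => b) atTop (nhds b)).sub hwtop
    simpa using h0
  have hupos : ∀ ξ, 0 < b - w ξ := fun ξ => sub_pos.2 (hwub ξ)
  have hu_anti : ∀ ⦃ξ η : ℝ⦄, ξ ≤ η → b - w η ≤ b - w ξ := fun ξ η hξη => by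
    have := hmono.monotone hξη; linarith
  have hub : ∀ ξ, b - w ξ ≤ b := fun ξ => by linarith [hwlb ξ]
  -- the nonlinearity along the trajectory
  set h : ℝ → ℝ := fun ξ => f (w ξ) - b₁ * (b - w ξ) with hhdef
  clear_value h
  have hcontfw : Continuous (fun ξ => f (w ξ)) :=
    hfC2.continuousOn.comp_continuous hcw (fun ξ => ⟨(hwlb ξ).le, (hwub ξ).le⟩)
  have hch : Continuous h := by
    rw [hhdef]
    exact hcontfw.sub (continuous_const.mul (continuous_const.sub hcw))
  obtain ⟨K, hK0, hKb⟩ := quad_bound b b₁ hb hb₁ f hfC2 hfb hf'b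
  have hhq : ∀ ξ, b - w ξ ≤ b / 2 → |h ξ| ≤ K * (b - w ξ) ^ 2 := by
    intro ξ hξ
    rw [hhdef]
    have h1 := hKb (b - w ξ) (hupos ξ) hξ
    have heq : b - (b - w ξ) = w ξ := by ring
    rw [heq] at h1
    exact h1
  -- choose the starting point
  have hδ : (0:ℝ) < min (b / 2) (-μ * μp / (4 * K)) := by
    apply lt_min (by linarith)
    have : 0 < -μ := by linarith
    positivity
  obtain ⟨Ξ₁, hΞ₁⟩ := eventually_atTop.1 (hu0.eventually_lt_const hδ)
  have hΞ₁' : ∀ ξ, Ξ₁ ≤ ξ → b - w ξ ≤ b / 2 ∧ K * (b - w ξ) ≤ -μ * μp / 4 := by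
    intro ξ hξ
    have h1 := hΞ₁ ξ hξ
    constructor
    · exact le_of_lt (lt_of_lt_of_le h1 (min_le_left _ _))
    · have h2 : b - w ξ ≤ -μ * μp / (4 * K) := le_of_lt (lt_of_lt_of_le h1 (min_le_right _ _))
      calc K * (b - w ξ) ≤ K * (-μ * μp / (4 * K)) := by nlinarith
        _ = -μ * μp / 4 := by field_simp
  -- the function r = μp u + w', Riccati-type comparison
  set r : ℝ → ℝ := fun ξ => μp * (b - w ξ) + deriv w ξ with hrdef
  clear_value r
  have hu'at : ∀ ξ : ℝ, HasDerivAt (fun η => b - w η) (-(deriv w ξ)) ξ := fun ξ =>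
    (hdw ξ).hasDerivAt.const_sub b
  have hr' : ∀ ξ, HasDerivAt r (μ * r ξ - h ξ) ξ := by
    intro ξ
    have h1 := ((hu'at ξ).const_mul μp).fun_add (hdw1 ξ).hasDerivAt
    have h2 : μp * -(deriv w ξ) + deriv (deriv w) ξ = μ * r ξ - h ξ := by
      simp only [hrdef, hhdef, hODE ξ]
      linear_combination (-(deriv w ξ)) * hsum - (b - w ξ) * hmulμ
    rw [h2] at h1
    rw [← hrdef] at h1
    exact h1
  have hrpos : ∀ ξ, 0 < r ξ := fun ξ => by
    have h1 := hW1 ξ; have h2 := hupos ξ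
    simp only [hrdef]
    nlinarith
  have hru : ∀ ξ, μp * (b - w ξ) ≤ r ξ := fun ξ => by
    have h1 := hW1 ξ
    simp only [hrdef]
    linarith
  set ρ : ℝ := 3 * μ / 4 with hρdef
  clear_value ρ
  have hρneg : ρ < 0 := by rw [hρdef]; linarith
  have hexp' : ∀ (k ξ : ℝ), HasDerivAt (fun η : ℝ => Real.exp (-(k * η)))
      (-k * Real.exp (-(k * ξ))) ξ := by
    intro k ξ
    have h1 : HasDerivAt (fun η : ℝ => -(k * η)) (-k) ξ := by
      simpa using ((hasDerivAt_id ξ).const_mul k).fun_neg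
    simpa [mul_comm, Function.comp_def] using (Real.hasDerivAt_exp (-(k * ξ))).comp ξ h1
  set R : ℝ → ℝ := fun ξ => r ξ * Real.exp (-(ρ * ξ)) with hRdef
  clear_value R
  have hR' : ∀ ξ, HasDerivAt R ((μ * r ξ - h ξ - ρ * r ξ) * Real.exp (-(ρ * ξ))) ξ := by
    intro ξ
    have h1 := (hr' ξ).fun_mul (hexp' ρ ξ)
    rw [hRdef]
    refine h1.congr_deriv ?_
    ring
  have hRd : Differentiable ℝ R := fun ξ => (hR' ξ).differentiableAt
  have hRanti : AntitoneOn R (Ici Ξ₁) := by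
    apply antitoneOn_of_deriv_nonpos (convex_Ici Ξ₁) hRd.continuous.continuousOn
      hRd.differentiableOn
    intro ξ hξ
    rw [interior_Ici] at hξ
    rw [(hR' ξ).deriv]
    have hq := hΞ₁' ξ (le_of_lt hξ)
    have hh := abs_le.1 (hhq ξ hq.1)
    have h3 : μ * r ξ - h ξ - ρ * r ξ ≤ 0 := by
      have h4 : K * (b - w ξ) ^ 2 ≤ -μ / 4 * (μp * (b - w ξ)) := by
        have h5 := hupos ξ
        nlinarith [hq.2]
      have h6 := hru ξ
      have h7 := hrpos ξ
      rw [hρdef]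
      nlinarith
    exact mul_nonpos_of_nonpos_of_nonneg h3 (Real.exp_nonneg _)
  set C₁ : ℝ := r Ξ₁ * Real.exp (-(ρ * Ξ₁)) / μp with hC₁def
  clear_value C₁
  have hC₁pos : 0 < C₁ := by
    have := hrpos Ξ₁
    rw [hC₁def]
    positivity
  have huexp : ∀ ξ, Ξ₁ ≤ ξ → b - w ξ ≤ C₁ * Real.exp (ρ * ξ) := by
    intro ξ hξ
    have h1 : R ξ ≤ R Ξ₁ := hRanti self_mem_Ici hξ hξ
    have h2 : r ξ = R ξ * Real.exp (ρ * ξ) := by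
      rw [hRdef]
      simp only
      rw [mul_assoc, ← Real.exp_add]
      simp
    have h4 : μp * (b - w ξ) ≤ R Ξ₁ * Real.exp (ρ * ξ) := by
      calc μp * (b - w ξ) ≤ r ξ := hru ξ
        _ = R ξ * Real.exp (ρ * ξ) := h2
        _ ≤ R Ξ₁ * Real.exp (ρ * ξ) := by nlinarith [Real.exp_pos (ρ * ξ)]
    have h5 : C₁ = R Ξ₁ / μp := by rw [hC₁def, hRdef]
    rw [h5, div_mul_eq_mul_div, le_div_iff₀ hμp]
    nlinarith
  -- p2 and ψ
  set p2 : ℝ → ℝ := fun ξ => -(deriv w ξ) - μ * (b - w ξ) with hp2def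
  clear_value p2
  have hp2' : ∀ ξ, HasDerivAt p2 (μp * p2 ξ + h ξ) ξ := by
    intro ξ
    have h1 := ((hdw1 ξ).hasDerivAt.fun_neg).fun_sub ((hu'at ξ).const_mul μ)
    have h2 : -(deriv (deriv w) ξ) - μ * -(deriv w ξ) = μp * p2 ξ + h ξ := by
      simp only [hp2def, hhdef, hODE ξ]
      linear_combination (deriv w ξ) * hsum + (b - w ξ) * hmulμ
    rw [h2] at h1
    rw [← hp2def] at h1
    exact h1
  have hp2c : Continuous p2 := by
    rw [hp2def]
    exact (hcw1.neg).sub (continuous_const.mul (continuous_const.sub hcw))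
  have hp2ub : ∀ ξ, p2 ξ ≤ -μ * b := by
    intro ξ
    have h1 := hW1 ξ; have h2 := hupos ξ; have h3 := hub ξ
    simp only [hp2def]
    nlinarith
  set ψ : ℝ → ℝ := fun ξ => p2 ξ * Real.exp (-(μp * ξ)) with hψdef
  clear_value ψ
  have hψ' : ∀ ξ, HasDerivAt ψ (h ξ * Real.exp (-(μp * ξ))) ξ := by
    intro ξ
    have h1 := (hp2' ξ).fun_mul (hexp' μp ξ)
    rw [hψdef]
    refine h1.congr_deriv ?_
    ring
  have hψG : Continuous (fun ξ => h ξ * Real.exp (-(μp * ξ))) :=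
    hch.mul (Real.continuous_exp.comp (continuous_const.mul continuous_id).neg)
  have hexpsq : ∀ (k₁ k₂ ξ : ℝ), Real.exp (k₁ * ξ) ^ 2 * Real.exp (-(k₂ * ξ))
      = Real.exp ((2 * k₁ - k₂) * ξ) := by
    intro k₁ k₂ ξ
    rw [sq, ← Real.exp_add, ← Real.exp_add]
    congr 1
    ring
  have hψbd : ∀ ξ ∈ Ioi Ξ₁, |h ξ * Real.exp (-(μp * ξ))|
      ≤ K * C₁ ^ 2 * Real.exp ((2 * ρ - μp) * ξ) := by
    intro ξ hξ
    have hq := hΞ₁' ξ (le_of_lt hξ)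
    have h1 := hhq ξ hq.1
    have h2 := huexp ξ (le_of_lt hξ)
    have hup := hupos ξ
    have he := Real.exp_pos (-(μp * ξ))
    rw [abs_mul, abs_of_pos he]
    calc |h ξ| * Real.exp (-(μp * ξ)) ≤ (K * (b - w ξ) ^ 2) * Real.exp (-(μp * ξ)) := by
          nlinarith
      _ ≤ (K * (C₁ * Real.exp (ρ * ξ)) ^ 2) * Real.exp (-(μp * ξ)) := by
          have h3 := pow_le_pow_left₀ hup.le h2 2
          exact mul_le_mul_of_nonneg_right (mul_le_mul_of_nonneg_left h3 hK0.le) he.le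
      _ = K * C₁ ^ 2 * (Real.exp (ρ * ξ) ^ 2 * Real.exp (-(μp * ξ))) := by ring
      _ = K * C₁ ^ 2 * Real.exp ((2 * ρ - μp) * ξ) := by rw [hexpsq]
  have hrate1 : 2 * ρ - μp < 0 := by linarith
  have hψint : IntegrableOn (fun ξ => h ξ * Real.exp (-(μp * ξ))) (Ioi Ξ₁) :=
    integrableOn_of_exp_bound hψG hrate1 hψbd
  have hψlim : Tendsto ψ atTop
      (nhds (ψ Ξ₁ + ∫ t in Ioi Ξ₁, h t * Real.exp (-(μp * t)))) :=
    tendsto_limit_of_deriv hψ' hψG hψint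
  have hψexp : ∀ ξ, p2 ξ = ψ ξ * Real.exp (μp * ξ) := by
    intro ξ
    rw [hψdef]
    simp only
    rw [mul_assoc, ← Real.exp_add]
    simp
  set IL : ℝ := ψ Ξ₁ + ∫ t in Ioi Ξ₁, h t * Real.exp (-(μp * t)) with hILdef
  clear_value IL
  have hexpT : Tendsto (fun ξ : ℝ => Real.exp (μp * ξ)) atTop atTop :=
    Real.tendsto_exp_atTop.comp ((tendsto_const_mul_atTop_of_pos hμp).2 tendsto_id)
  have hL0 : IL = 0 := by
    by_contra hne
    rcases lt_or_gt_of_ne hne with hneg | hpos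
    · -- limit negative : p2 → -∞, so w' → ∞, contradiction with boundedness of w
      have h1 : ∀ᶠ ξ in atTop, ψ ξ < IL / 2 := hψlim.eventually_lt_const (by linarith)
      have h2 : ∀ᶠ ξ in atTop, p2 ξ ≤ IL / 2 * Real.exp (μp * ξ) := by
        filter_upwards [h1] with ξ hξ
        rw [hψexp ξ]
        exact mul_le_mul_of_nonneg_right hξ.le (Real.exp_nonneg _)
      have h3 : Tendsto (fun ξ : ℝ => IL / 2 * Real.exp (μp * ξ)) atTop atBot := by
        have h4 : Tendsto (fun ξ : ℝ => -IL / 2 * Real.exp (μp * ξ)) atTop atTop :=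
          hexpT.const_mul_atTop (by linarith)
        have h5 := tendsto_neg_atBot_iff.2 h4
        refine h5.congr fun ξ => by ring
      have h6 : ∀ᶠ ξ in atTop, p2 ξ ≤ -1 := by
        filter_upwards [h2, h3.eventually_le_atBot (-1)] with ξ hξ1 hξ2
        linarith
      obtain ⟨A, hA⟩ := eventually_atTop.1 h6
      have hW1lb : ∀ ξ, A ≤ ξ → 1 ≤ deriv w ξ := by
        intro ξ hξ
        have h7 := hA ξ hξ
        simp only [hp2def] at h7
        have h8 := hupos ξ
        nlinarith
      have hmonF : MonotoneOn (fun ξ => w ξ - ξ) (Ici A) := by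
        apply monotoneOn_of_deriv_nonneg (convex_Ici A)
          (Continuous.continuousOn (hcw.sub continuous_id))
        · exact fun ξ _ =>
            (((hdw ξ).hasDerivAt.sub (hasDerivAt_id ξ)).differentiableAt).differentiableWithinAt
        · intro ξ hξ
          rw [interior_Ici] at hξ
          rw [((hdw ξ).hasDerivAt.sub (hasDerivAt_id ξ)).deriv]
          have := hW1lb ξ hξ.le
          linarith
      have h9 := hmonF (self_mem_Ici) (show A + b + 1 ∈ Ici A from by
        simp only [mem_Ici]; linarith) (by linarith)
      simp only at h9
      have h10 := hwub (A + b + 1)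
      have h11 := hwlb A
      linarith
    · -- limit positive : p2 → +∞ contradicts p2 ≤ -μ b
      have h1 : ∀ᶠ ξ in atTop, IL / 2 < ψ ξ := hψlim.eventually_const_lt (by linarith)
      have h2 : ∀ᶠ ξ in atTop, IL / 2 * Real.exp (μp * ξ) ≤ p2 ξ := by
        filter_upwards [h1] with ξ hξ
        rw [hψexp ξ]
        exact mul_le_mul_of_nonneg_right hξ.le (Real.exp_nonneg _)
      have h3 : Tendsto (fun ξ : ℝ => IL / 2 * Real.exp (μp * ξ)) atTop atTop :=
        hexpT.const_mul_atTop (by linarith)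
      obtain ⟨ξ, hξ1, hξ2⟩ := (h2.and (h3.eventually_ge_atTop (-μ * b + 1))).exists
      have := hp2ub ξ
      linarith
  -- representation of ψ as a tail integral, and the resulting bound on p2
  have hψ0 : ∀ ξ, Ξ₁ ≤ ξ → ψ ξ = - ∫ t in Ioi ξ, h t * Real.exp (-(μp * t)) := by
    intro ξ hξ
    have h1 := tendsto_limit_of_deriv hψ' hψG (hψint.mono_set (Ioi_subset_Ioi hξ))
    have h2 := tendsto_nhds_unique h1 hψlim
    rw [hL0] at h2
    linarith
  have hintexp : ∀ ξ : ℝ, IntegrableOn (fun t => Real.exp (-(μp * t))) (Ioi ξ) := by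
    intro ξ
    have := integrableOn_exp_rate ξ (neg_neg_iff_pos.2 hμp : -μp < 0)
    simpa [neg_mul] using this
  have hp2bd : ∀ ξ, Ξ₁ ≤ ξ → |p2 ξ| ≤ K / μp * (b - w ξ) ^ 2 := by
    intro ξ hξ
    have hrep := hψ0 ξ hξ
    have hbound : ∀ᵐ t ∂(MeasureTheory.volume.restrict (Ioi ξ)),
        ‖h t * Real.exp (-(μp * t))‖ ≤ K * (b - w ξ) ^ 2 * Real.exp (-(μp * t)) := by
      refine (ae_restrict_iff' measurableSet_Ioi).2 (Filter.Eventually.of_forall ?_)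
      intro t ht
      have htξ : ξ ≤ t := le_of_lt ht
      have h1 := hhq t (le_trans (hu_anti htξ) (hΞ₁' ξ hξ).1)
      have h2 : (b - w t) ^ 2 ≤ (b - w ξ) ^ 2 :=
        pow_le_pow_left₀ (hupos t).le (hu_anti htξ) 2
      have he := Real.exp_pos (-(μp * t))
      rw [Real.norm_eq_abs, abs_mul, abs_of_pos he]
      have h3 : |h t| ≤ K * (b - w ξ) ^ 2 := by nlinarith
      exact mul_le_mul_of_nonneg_right h3 he.le
    have hgint : MeasureTheory.Integrable (fun t => K * (b - w ξ) ^ 2 * Real.exp (-(μp * t)))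
        (MeasureTheory.volume.restrict (Ioi ξ)) := (hintexp ξ).const_mul _
    have h4 := MeasureTheory.norm_integral_le_of_norm_le hgint hbound
    have h5 : ∫ t in Ioi ξ, K * (b - w ξ) ^ 2 * Real.exp (-(μp * t))
        = K * (b - w ξ) ^ 2 * (Real.exp (-(μp * ξ)) / μp) := by
      rw [MeasureTheory.integral_const_mul, integral_Ioi_exp_rate ξ hμp]
    rw [h5] at h4
    have h6 : |ψ ξ| ≤ K * (b - w ξ) ^ 2 * (Real.exp (-(μp * ξ)) / μp) := by
      rw [hrep, abs_neg, ← Real.norm_eq_abs]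
      exact h4
    rw [hψexp ξ, abs_mul, abs_of_pos (Real.exp_pos _)]
    calc |ψ ξ| * Real.exp (μp * ξ)
        ≤ K * (b - w ξ) ^ 2 * (Real.exp (-(μp * ξ)) / μp) * Real.exp (μp * ξ) :=
          mul_le_mul_of_nonneg_right h6 (Real.exp_nonneg _)
      _ = K / μp * (b - w ξ) ^ 2 * (Real.exp (-(μp * ξ)) * Real.exp (μp * ξ)) := by ring
      _ = K / μp * (b - w ξ) ^ 2 := by rw [← Real.exp_add]; simp
  -- the weighted wave φ
  set φ : ℝ → ℝ := fun ξ => (b - w ξ) * Real.exp (-(μ * ξ)) with hφdef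
  clear_value φ
  have hφ' : ∀ ξ, HasDerivAt φ (p2 ξ * Real.exp (-(μ * ξ))) ξ := by
    intro ξ
    have h1 := (hu'at ξ).mul (hexp' μ ξ)
    rw [hφdef]
    have h2 : -(deriv w ξ) * Real.exp (-(μ * ξ)) + (b - w ξ) * (-μ * Real.exp (-(μ * ξ)))
        = p2 ξ * Real.exp (-(μ * ξ)) := by
      simp only [hp2def]; ring
    rw [← h2]
    exact h1
  have hφG : Continuous (fun ξ => p2 ξ * Real.exp (-(μ * ξ))) :=
    hp2c.mul (Real.continuous_exp.comp (continuous_const.mul continuous_id).neg)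
  have hφbd : ∀ ξ ∈ Ioi Ξ₁, |p2 ξ * Real.exp (-(μ * ξ))|
      ≤ K / μp * C₁ ^ 2 * Real.exp ((2 * ρ - μ) * ξ) := by
    intro ξ hξ
    have h1 := hp2bd ξ (le_of_lt hξ)
    have h2 := huexp ξ (le_of_lt hξ)
    have he := Real.exp_pos (-(μ * ξ))
    rw [abs_mul, abs_of_pos he]
    have h3 := pow_le_pow_left₀ (hupos ξ).le h2 2
    have hKμp : (0:ℝ) ≤ K / μp := by positivity
    calc |p2 ξ| * Real.exp (-(μ * ξ)) ≤ (K / μp * (b - w ξ) ^ 2) * Real.exp (-(μ * ξ)) :=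
          mul_le_mul_of_nonneg_right h1 he.le
      _ ≤ (K / μp * (C₁ * Real.exp (ρ * ξ)) ^ 2) * Real.exp (-(μ * ξ)) :=
          mul_le_mul_of_nonneg_right (mul_le_mul_of_nonneg_left h3 hKμp) he.le
      _ = K / μp * C₁ ^ 2 * (Real.exp (ρ * ξ) ^ 2 * Real.exp (-(μ * ξ))) := by ring
      _ = K / μp * C₁ ^ 2 * Real.exp ((2 * ρ - μ) * ξ) := by rw [hexpsq]
  have hrate2 : 2 * ρ - μ < 0 := by rw [hρdef]; linarith
  have hφint : IntegrableOn (fun ξ => p2 ξ * Real.exp (-(μ * ξ))) (Ioi Ξ₁) :=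
    integrableOn_of_exp_bound hφG hrate2 hφbd
  have hφlim : Tendsto φ atTop
      (nhds (φ Ξ₁ + ∫ t in Ioi Ξ₁, p2 t * Real.exp (-(μ * t)))) :=
    tendsto_limit_of_deriv hφ' hφG hφint
  set bw : ℝ := φ Ξ₁ + ∫ t in Ioi Ξ₁, p2 t * Real.exp (-(μ * t)) with hbwdef
  clear_value bw
  have hφpos : ∀ ξ, 0 < φ ξ := fun ξ => by
    rw [hφdef]; exact mul_pos (hupos ξ) (Real.exp_pos _)
  have hbw0 : 0 ≤ bw := ge_of_tendsto hφlim (Eventually.of_forall fun ξ => (hφpos ξ).le)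
  refine ⟨bw, ?_, ?_⟩
  swap
  · exact hφlim
  rcases hbw0.lt_or_eq with hlt | heq
  · exact hlt
  exfalso
  -- representation of φ as a tail integral
  have hφ0 : ∀ ξ, Ξ₁ ≤ ξ → φ ξ = - ∫ t in Ioi ξ, p2 t * Real.exp (-(μ * t)) := by
    intro ξ hξ
    have h1 := tendsto_limit_of_deriv hφ' hφG (hφint.mono_set (Ioi_subset_Ioi hξ))
    have h2 := tendsto_nhds_unique h1 hφlim
    rw [← heq] at h2
    linarith
  -- improved decay of u
  set C₂ : ℝ := K / μp * C₁ ^ 2 * (2 / (-μ)) with hC₂def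
  have hC₂pos : 0 < C₂ := by
    rw [hC₂def]
    have : (0:ℝ) < -μ := by linarith
    positivity
  clear_value C₂
  have hu32 : ∀ ξ, Ξ₁ ≤ ξ → b - w ξ ≤ C₂ * Real.exp (3 * μ / 2 * ξ) := by
    intro ξ hξ
    have hbound : ∀ᵐ t ∂(MeasureTheory.volume.restrict (Ioi ξ)),
        ‖p2 t * Real.exp (-(μ * t))‖ ≤ K / μp * C₁ ^ 2 * Real.exp ((2 * ρ - μ) * t) := by
      refine (ae_restrict_iff' measurableSet_Ioi).2 (Filter.Eventually.of_forall ?_)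
      intro t ht
      have h0 := hφbd t (lt_of_le_of_lt hξ ht)
      rw [Real.norm_eq_abs]
      exact h0
    have hgint : MeasureTheory.Integrable (fun t => K / μp * C₁ ^ 2 *
        Real.exp ((2 * ρ - μ) * t)) (MeasureTheory.volume.restrict (Ioi ξ)) :=
      (integrableOn_exp_rate ξ hrate2).const_mul _
    have h4 := MeasureTheory.norm_integral_le_of_norm_le hgint hbound
    have hcong : ∀ t : ℝ, Real.exp ((2 * ρ - μ) * t) = Real.exp (-(-μ / 2 * t)) := by
      intro t
      congr 1
      rw [hρdef]
      ring
    have h5 : ∫ t in Ioi ξ, K / μp * C₁ ^ 2 * Real.exp ((2 * ρ - μ) * t)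
        = K / μp * C₁ ^ 2 * (Real.exp (-(-μ / 2 * ξ)) / (-μ / 2)) := by
      rw [MeasureTheory.integral_const_mul]
      congr 1
      rw [show (fun t : ℝ => Real.exp ((2 * ρ - μ) * t))
          = fun t : ℝ => Real.exp (-(-μ / 2 * t)) from funext hcong]
      exact integral_Ioi_exp_rate ξ (by linarith : (0:ℝ) < -μ / 2)
    rw [h5] at h4
    have h6 : φ ξ ≤ K / μp * C₁ ^ 2 * (Real.exp (-(-μ / 2 * ξ)) / (-μ / 2)) := by
      have h7 : |φ ξ| ≤ K / μp * C₁ ^ 2 * (Real.exp (-(-μ / 2 * ξ)) / (-μ / 2)) := by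
        rw [hφ0 ξ hξ, abs_neg, ← Real.norm_eq_abs]
        exact h4
      exact le_trans (le_abs_self _) h7
    have h8 : b - w ξ = φ ξ * Real.exp (μ * ξ) := by
      rw [hφdef]
      simp only
      rw [mul_assoc, ← Real.exp_add]
      simp
    rw [h8]
    calc φ ξ * Real.exp (μ * ξ)
        ≤ K / μp * C₁ ^ 2 * (Real.exp (-(-μ / 2 * ξ)) / (-μ / 2)) * Real.exp (μ * ξ) :=
          mul_le_mul_of_nonneg_right h6 (Real.exp_nonneg _)
      _ = C₂ * (Real.exp (-(-μ / 2 * ξ)) * Real.exp (μ * ξ)) := by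
          rw [hC₂def]; field_simp
      _ = C₂ * Real.exp (3 * μ / 2 * ξ) := by
          rw [← Real.exp_add]
          congr 2
          ring
  -- lower Gronwall bound for r
  have hexp2 : ∀ (k ξ : ℝ), HasDerivAt (fun η : ℝ => Real.exp (k * η))
      (k * Real.exp (k * ξ)) ξ := by
    intro k ξ
    have h1 : HasDerivAt (fun η : ℝ => k * η) k ξ := by
      simpa using (hasDerivAt_id ξ).const_mul k
    simpa [mul_comm, Function.comp_def] using (Real.hasDerivAt_exp (k * ξ)).comp ξ h1
  set a : ℝ := K * C₁ / μp with hadef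
  have hapos : 0 < a := by rw [hadef]; positivity
  clear_value a
  set M : ℝ → ℝ := fun ξ => μ * ξ - a / ρ * Real.exp (ρ * ξ) with hMdef
  clear_value M
  have hM' : ∀ ξ, HasDerivAt M (μ - a * Real.exp (ρ * ξ)) ξ := by
    intro ξ
    rw [hMdef]
    have h1 : HasDerivAt (fun η : ℝ => μ * η) μ ξ := by
      simpa using (hasDerivAt_id ξ).const_mul μ
    have h2 := (hexp2 ρ ξ).const_mul (a / ρ)
    have h3 := h1.fun_sub h2
    have hρne : ρ ≠ 0 := ne_of_lt hρneg
    refine h3.congr_deriv ?_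
    field_simp
  have hMge : ∀ ξ, μ * ξ ≤ M ξ := by
    intro ξ
    rw [hMdef]
    simp only
    have h1 : a / ρ ≤ 0 := div_nonpos_of_nonneg_of_nonpos hapos.le hρneg.le
    nlinarith [Real.exp_pos (ρ * ξ)]
  have hGfn' : ∀ ξ, HasDerivAt (fun η => r η * Real.exp (-(M η)))
      ((μ * r ξ - h ξ - (μ - a * Real.exp (ρ * ξ)) * r ξ) * Real.exp (-(M ξ))) ξ := by
    intro ξ
    have hexpM : HasDerivAt (fun η => Real.exp (-(M η)))
        (Real.exp (-(M ξ)) * -(μ - a * Real.exp (ρ * ξ))) ξ :=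
      by have := (Real.hasDerivAt_exp (-(M ξ))).comp ξ (hM' ξ).fun_neg; exact this
    have h1 := (hr' ξ).fun_mul hexpM
    refine h1.congr_deriv ?_
    ring
  have hGmon : MonotoneOn (fun η => r η * Real.exp (-(M η))) (Ici Ξ₁) := by
    apply monotoneOn_of_deriv_nonneg (convex_Ici Ξ₁)
    · exact (Differentiable.continuous fun ξ => (hGfn' ξ).differentiableAt).continuousOn
    · exact fun ξ _ => (hGfn' ξ).differentiableAt.differentiableWithinAt
    · intro ξ hξ
      rw [interior_Ici] at hξ
      rw [(hGfn' ξ).deriv]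
      have hq := hΞ₁' ξ hξ.le
      have hh := abs_le.1 (hhq ξ hq.1)
      have h1 := huexp ξ hξ.le
      have h2 := hru ξ
      have h3 := hrpos ξ
      have h4 := hupos ξ
      have he := Real.exp_pos (ρ * ξ)
      have h5 : h ξ ≤ a * Real.exp (ρ * ξ) * r ξ := by
        have h6 : K * (b - w ξ) ^ 2 ≤ K * (C₁ * Real.exp (ρ * ξ)) * (b - w ξ) := by
          nlinarith
        have h7 : K * (C₁ * Real.exp (ρ * ξ)) * (b - w ξ)
            = a * Real.exp (ρ * ξ) * (μp * (b - w ξ)) := by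
          rw [hadef]; field_simp
        have h9 : a * Real.exp (ρ * ξ) * (μp * (b - w ξ)) ≤ a * Real.exp (ρ * ξ) * r ξ :=
          mul_le_mul_of_nonneg_left h2 (by positivity)
        linarith [hh.2, h6, h7.le, h9]
      have h8 : 0 ≤ μ * r ξ - h ξ - (μ - a * Real.exp (ρ * ξ)) * r ξ := by nlinarith
      exact mul_nonneg h8 (Real.exp_nonneg _)
  set c₀ : ℝ := r Ξ₁ * Real.exp (-(M Ξ₁)) with hc₀def
  have hc₀pos : 0 < c₀ := by
    rw [hc₀def]
    exact mul_pos (hrpos Ξ₁) (Real.exp_pos _)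
  clear_value c₀
  have hrlb : ∀ ξ, Ξ₁ ≤ ξ → c₀ * Real.exp (μ * ξ) ≤ r ξ := by
    intro ξ hξ
    have h1 := hGmon self_mem_Ici hξ hξ
    simp only at h1
    rw [← hc₀def] at h1
    have h2 : c₀ * Real.exp (μ * ξ) ≤ c₀ * Real.exp (M ξ) := by
      have := Real.exp_le_exp.2 (hMge ξ)
      nlinarith
    calc c₀ * Real.exp (μ * ξ) ≤ c₀ * Real.exp (M ξ) := h2
      _ ≤ r ξ * Real.exp (-(M ξ)) * Real.exp (M ξ) := by
          nlinarith [Real.exp_pos (M ξ)]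
      _ = r ξ := by rw [mul_assoc, ← Real.exp_add]; simp
  -- choose the final threshold
  have htmuhalf : Tendsto (fun ξ : ℝ => Real.exp (μ / 2 * ξ)) atTop (nhds 0) := by
    apply Real.tendsto_exp_atBot.comp
    have h1 : Tendsto (fun ξ : ℝ => -μ / 2 * ξ) atTop atTop :=
      (tendsto_const_mul_atTop_of_pos (by linarith)).2 tendsto_id
    have h2 := tendsto_neg_atBot_iff.2 h1
    exact h2.congr fun ξ => by ring
  have htmu : Tendsto (fun ξ : ℝ => Real.exp (μ * ξ)) atTop (nhds 0) := by
    apply Real.tendsto_exp_atBot.comp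
    have h1 : Tendsto (fun ξ : ℝ => -μ * ξ) atTop atTop :=
      (tendsto_const_mul_atTop_of_pos (by linarith)).2 tendsto_id
    have h2 := tendsto_neg_atBot_iff.2 h1
    exact h2.congr fun ξ => by ring
  have hev4 : ∀ᶠ ξ in atTop, μp * C₂ * Real.exp (μ / 2 * ξ) < c₀ / 2 := by
    have h1 := htmuhalf.const_mul (μp * C₂)
    simp only [mul_zero] at h1
    exact h1.eventually_lt_const (by positivity)
  obtain ⟨Ξ₄', hΞ₄'⟩ := eventually_atTop.1 hev4
  set Ξ₄ := max Ξ₁ Ξ₄' with hΞ₄def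
  have hΞ₄1 : Ξ₁ ≤ Ξ₄ := le_max_left _ _
  have hW1lb2 : ∀ ξ, Ξ₄ ≤ ξ → c₀ / 2 * Real.exp (μ * ξ) ≤ deriv w ξ := by
    intro ξ hξ
    have hξ1 : Ξ₁ ≤ ξ := le_trans hΞ₄1 hξ
    have h1 := hrlb ξ hξ1
    have h2 := hu32 ξ hξ1
    have h3 := hΞ₄' ξ (le_trans (le_max_right _ _) hξ)
    have h4 : deriv w ξ = r ξ - μp * (b - w ξ) := by simp only [hrdef]; ring
    have h5 : Real.exp (3 * μ / 2 * ξ) = Real.exp (μ / 2 * ξ) * Real.exp (μ * ξ) := by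
      rw [← Real.exp_add]; congr 1; ring
    have h6 : μp * (b - w ξ) ≤ μp * C₂ * Real.exp (μ / 2 * ξ) * Real.exp (μ * ξ) := by
      calc μp * (b - w ξ) ≤ μp * (C₂ * Real.exp (3 * μ / 2 * ξ)) :=
            mul_le_mul_of_nonneg_left h2 hμp.le
        _ = μp * C₂ * Real.exp (μ / 2 * ξ) * Real.exp (μ * ξ) := by rw [h5]; ring
    have he := Real.exp_pos (μ * ξ)
    have h7 : μp * C₂ * Real.exp (μ / 2 * ξ) * Real.exp (μ * ξ)
        ≤ c₀ / 2 * Real.exp (μ * ξ) := mul_le_mul_of_nonneg_right h3.le he.le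
    linarith
  -- the comparison function N
  have hN' : ∀ ξ, HasDerivAt (fun η => (b - w η) + c₀ / (2 * μ) * Real.exp (μ * η))
      (-(deriv w ξ) + c₀ / 2 * Real.exp (μ * ξ)) ξ := by
    intro ξ
    have h1 := (hu'at ξ).fun_add ((hexp2 μ ξ).const_mul (c₀ / (2 * μ)))
    have hμne : μ ≠ 0 := ne_of_lt hμ
    refine h1.congr_deriv ?_
    field_simp
  have hNanti : AntitoneOn (fun η => (b - w η) + c₀ / (2 * μ) * Real.exp (μ * η)) (Ici Ξ₄) := by
    apply antitoneOn_of_deriv_nonpos (convex_Ici Ξ₄)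
    · exact (Differentiable.continuous fun ξ => (hN' ξ).differentiableAt).continuousOn
    · exact fun ξ _ => (hN' ξ).differentiableAt.differentiableWithinAt
    · intro ξ hξ
      rw [interior_Ici] at hξ
      rw [(hN' ξ).deriv]
      have := hW1lb2 ξ hξ.le
      linarith
  have hNlim : Tendsto (fun η => (b - w η) + c₀ / (2 * μ) * Real.exp (μ * η))
      atTop (nhds 0) := by
    have h1 := hu0.add (htmu.const_mul (c₀ / (2 * μ)))
    have h2 : (0:ℝ) + c₀ / (2 * μ) * 0 = 0 := by ring
    rw [h2] at h1
    exact h1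
  have hNpos : ∀ ξ, Ξ₄ ≤ ξ → 0 ≤ (b - w ξ) + c₀ / (2 * μ) * Real.exp (μ * ξ) := by
    intro ξ hξ
    refine le_of_tendsto hNlim ?_
    rw [eventually_atTop]
    exact ⟨ξ, fun t ht => hNanti (mem_Ici.2 hξ) (mem_Ici.2 (le_trans hξ ht)) ht⟩
  -- conclusion
  have hφlb : ∀ ξ, Ξ₄ ≤ ξ → -(c₀ / (2 * μ)) ≤ φ ξ := by
    intro ξ hξ
    have h1 := hNpos ξ hξ
    have h2 : -(c₀ / (2 * μ)) * Real.exp (μ * ξ) ≤ b - w ξ := by linarith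
    have he := Real.exp_pos (-(μ * ξ))
    have h3 : φ ξ = (b - w ξ) * Real.exp (-(μ * ξ)) := by rw [hφdef]
    rw [h3]
    calc -(c₀ / (2 * μ))
        = -(c₀ / (2 * μ)) * (Real.exp (μ * ξ) * Real.exp (-(μ * ξ))) := by
          rw [← Real.exp_add]; simp
      _ = (-(c₀ / (2 * μ)) * Real.exp (μ * ξ)) * Real.exp (-(μ * ξ)) := by ring
      _ ≤ (b - w ξ) * Real.exp (-(μ * ξ)) := mul_le_mul_of_nonneg_right h2 he.le
  have hfinal : -(c₀ / (2 * μ)) ≤ bw := by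
    refine ge_of_tendsto hφlim ?_
    rw [eventually_atTop]
    exact ⟨Ξ₄, hφlb⟩
  have hεpos : 0 < -(c₀ / (2 * μ)) := by
    have : c₀ / (2 * μ) < 0 := div_neg_of_pos_of_neg hc₀pos (by linarith)
    linarith
  linarith [hfinal, hεpos]
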